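/- The value V(0,∅) of the dynamic programming recursion equals the optimal manipulation value, i.e., V(0,∅) = max over all rankings ≻ (bijections I → {1,…,m}) of u(φ_≻(a₁)). -/

import Mathlib

/-- One step of the sequential allocation process: an agent with ranking `rk`
(a bijection `Fin m ≃ Fin m`, lower rank = more preferred) greedily picks the
lowest-rank item among the remaining ones (the complement of the already
picked set `S`); if nothing is left, nothing happens. -/
def pickStep {m : ℕ} (rk : Fin m ≃ Fin m) (S : Finset (Fin m)) : Finset (Fin m) :=
  S ∪ Sᶜ.filter fun i => ∀ j ∈ Sᶜ, rk i ≤ rk j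

/-- `pickedUpTo rpt π t` : the set of items picked during the first `t` steps of
the sequential allocation process, where `π` is the (0-indexed) picking sequence
and agent `a` reports the ranking `rpt a`. -/
def pickedUpTo {A : Type*} {m : ℕ} (rpt : A → Fin m ≃ Fin m) (π : ℕ → A) :
    ℕ → Finset (Fin m)
  | 0 => ∅
  | t + 1 => pickStep (rpt (π t)) (pickedUpTo rpt π t)

/-- `alloc rpt π a` : the bundle of items obtained by agent `a` at the end of the
sequential allocation process (which runs for `m` steps). -/
def alloc {A : Type*} [DecidableEq A] {m : ℕ} (rpt : A → Fin m ≃ Fin m)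
    (π : ℕ → A) (a : A) : Finset (Fin m) :=
  (Finset.range m).biUnion fun t =>
    if π t = a then pickedUpTo rpt π (t + 1) \ pickedUpTo rpt π t else ∅

/-- `bFun rk S h` : the most preferred item of `I ∖ S` under the ranking `rk`,
i.e. `b(a, S)` for an agent `a` with ranking `rk`. -/
noncomputable def bFun {m : ℕ} (rk : Fin m ≃ Fin m) (S : Finset (Fin m))
    (h : Sᶜ.Nonempty) : Fin m :=
  rk.symm ((Sᶜ.image rk).min' (h.image rk))

lemma bFun_not_mem {m : ℕ} (rk : Fin m ≃ Fin m) (S : Finset (Fin m))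
    (h : Sᶜ.Nonempty) : bFun rk S h ∉ S := by
  have hmem : (Sᶜ.image rk).min' (h.image rk) ∈ Sᶜ.image rk := Finset.min'_mem _ _
  obtain ⟨y, hy, hyeq⟩ := Finset.mem_image.mp hmem
  have hb : bFun rk S h = y := by simp [bFun, ← hyeq]
  rw [hb]
  exact Finset.mem_compl.mp hy

/-- The dynamic-programming value function `V` on states `(k, S)`:
`V k S = Σ_{i ∈ I∖S} u i` when `|S| + k = m`;
`V k S = V (k+1) S` when the next picker `π(|S|+k+1)` (0-indexed: `π (|S|+k)`)
is the manipulator `a₁`; and otherwise, with `b = b(a,S)` the best remaining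
item of the next picker `a ≠ a₁`,
`V 0 S = V 0 (S ∪ {b})` and
`V k S = max (V (k-1) (S ∪ {b}) + u b) (V k (S ∪ {b}))` for `k ≥ 1`. -/
noncomputable def V {A : Type*} [DecidableEq A] {m : ℕ} (a₁ : A)
    (rk : A → Fin m ≃ Fin m) (π : ℕ → A) (u : Fin m → ℝ)
    (k : ℕ) (S : Finset (Fin m)) : ℝ :=
  if hlt : S.card + k < m then
    if hπ : π (S.card + k) = a₁ then
      V a₁ rk π u (k + 1) S
    else
      have hne : Sᶜ.Nonempty := by
        rw [← Finset.card_pos, Finset.card_compl, Fintype.card_fin]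
        omega
      if hk : k = 0 then
        V a₁ rk π u 0 (insert (bFun (rk (π (S.card + k))) S hne) S)
      else
        max (V a₁ rk π u (k - 1) (insert (bFun (rk (π (S.card + k))) S hne) S)
              + u (bFun (rk (π (S.card + k))) S hne))
          (V a₁ rk π u k (insert (bFun (rk (π (S.card + k))) S hne) S))
  else
    ∑ i ∈ Sᶜ, u i
termination_by (m - (S.card + k), k)
decreasing_by
  · apply Prod.Lex.left
    omega
  · apply Prod.Lex.left
    rw [Finset.card_insert_of_notMem (bFun_not_mem _ _ _)]
    omega
  · have hcard : (insert (bFun (rk (π (S.card + k))) S hne) S).card + (k - 1)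
        = S.card + k := by
      rw [Finset.card_insert_of_notMem (bFun_not_mem _ _ _)]
      omega
    rw [hcard]
    exact Prod.Lex.right _ (by omega)
  · apply Prod.Lex.left
    rw [Finset.card_insert_of_notMem (bFun_not_mem _ _ _)]
    omega

open Finset in
lemma bFun_mem_compl {m : ℕ} (rk : Fin m ≃ Fin m) (S : Finset (Fin m))
    (h : Sᶜ.Nonempty) : bFun rk S h ∈ Sᶜ := by
  have := Finset.mem_compl.mpr (bFun_not_mem rk S h)
  exact this

lemma rk_bFun {m : ℕ} (rk : Fin m ≃ Fin m) (S : Finset (Fin m))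
    (h : Sᶜ.Nonempty) : rk (bFun rk S h) = (Sᶜ.image rk).min' (h.image rk) := by
  simp [bFun]

lemma bFun_min {m : ℕ} (rk : Fin m ≃ Fin m) (S : Finset (Fin m))
    (h : Sᶜ.Nonempty) : ∀ j ∈ Sᶜ, rk (bFun rk S h) ≤ rk j := by
  intro j hj
  rw [rk_bFun]
  exact Finset.min'_le _ _ (Finset.mem_image_of_mem rk hj)

lemma bFun_unique {m : ℕ} (rk : Fin m ≃ Fin m) (S : Finset (Fin m))
    (h : Sᶜ.Nonempty) {x : Fin m} (hx : x ∈ Sᶜ)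
    (hmin : ∀ j ∈ Sᶜ, rk x ≤ rk j) : x = bFun rk S h := by
  have h1 := bFun_min rk S h x hx
  have h2 := hmin _ (bFun_mem_compl rk S h)
  exact rk.injective (le_antisymm h2 h1)

lemma bFun_subset {m : ℕ} (rk : Fin m ≃ Fin m) {S T : Finset (Fin m)}
    (hST : S ⊆ T) (h : Sᶜ.Nonempty) (h' : Tᶜ.Nonempty)
    (hb : bFun rk S h ∈ Tᶜ) : bFun rk T h' = bFun rk S h := by
  refine (bFun_unique rk T h' hb ?_).symm
  intro j hj
  exact bFun_min rk S h j (Finset.mem_compl.mpr fun hjS => (Finset.mem_compl.mp hj) (hST hjS))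

lemma pickStep_eq {m : ℕ} (rk : Fin m ≃ Fin m) (S : Finset (Fin m))
    (h : Sᶜ.Nonempty) : pickStep rk S = insert (bFun rk S h) S := by
  have hfil : Sᶜ.filter (fun i => ∀ j ∈ Sᶜ, rk i ≤ rk j) = {bFun rk S h} := by
    ext x
    simp only [Finset.mem_filter, Finset.mem_singleton]
    constructor
    · rintro ⟨hx, hmin⟩
      exact bFun_unique rk S h hx hmin
    · rintro rfl
      exact ⟨bFun_mem_compl rk S h, bFun_min rk S h⟩
  rw [pickStep, hfil]
  rw [Finset.union_comm]
  rfl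

lemma subset_pickStep {m : ℕ} (rk : Fin m ≃ Fin m) (S : Finset (Fin m)) :
    S ⊆ pickStep rk S := Finset.subset_union_left

lemma card_pickStep {m : ℕ} (rk : Fin m ≃ Fin m) (S : Finset (Fin m))
    (h : Sᶜ.Nonempty) : (pickStep rk S).card = S.card + 1 := by
  rw [pickStep_eq rk S h, Finset.card_insert_of_notMem (bFun_not_mem rk S h)]

lemma compl_nonempty_of_card {m : ℕ} {S : Finset (Fin m)} (h : S.card < m) :
    Sᶜ.Nonempty := by
  rw [← Finset.card_pos, Finset.card_compl, Fintype.card_fin]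
  omega

lemma card_pickedUpTo {A : Type*} {m : ℕ} (rpt : A → Fin m ≃ Fin m) (π : ℕ → A) :
    ∀ t, t ≤ m → (pickedUpTo rpt π t).card = t := by
  intro t
  induction t with
  | zero => simp [pickedUpTo]
  | succ n ih =>
    intro h
    have h1 := ih (by omega)
    rw [pickedUpTo, card_pickStep _ _ (compl_nonempty_of_card (by omega)), h1]
/-- Items gained by the manipulator `a₁` in the next `n` steps of the process
started with set `T` at time `t`. -/
def gSet {A : Type*} [DecidableEq A] {m : ℕ} (a₁ : A) (rpt : A → Fin m ≃ Fin m)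
    (π : ℕ → A) (T : Finset (Fin m)) (t : ℕ) : ℕ → Finset (Fin m)
  | 0 => ∅
  | n + 1 =>
    (if π t = a₁ then pickStep (rpt (π t)) T \ T else ∅) ∪
      gSet a₁ rpt π (pickStep (rpt (π t)) T) (t + 1) n

lemma gSet_subset_compl {A : Type*} [DecidableEq A] {m : ℕ} (a₁ : A)
    (rpt : A → Fin m ≃ Fin m) (π : ℕ → A) :
    ∀ n T t, gSet a₁ rpt π T t n ⊆ Tᶜ := by
  intro n
  induction n with
  | zero => intro T t; simp [gSet]
  | succ n ih =>
    intro T t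
    rw [gSet]
    apply Finset.union_subset
    · split
      · intro x hx
        rw [Finset.mem_compl]
        exact (Finset.mem_sdiff.mp hx).2
      · simp
    · refine (ih _ _).trans ?_
      intro x hx
      rw [Finset.mem_compl] at hx ⊢
      exact fun hxT => hx (subset_pickStep _ _ hxT)

lemma gSet_biUnion {A : Type*} [DecidableEq A] {m : ℕ} (a₁ : A)
    (rpt : A → Fin m ≃ Fin m) (π : ℕ → A) :
    ∀ n t, gSet a₁ rpt π (pickedUpTo rpt π t) t n =
      (Finset.range n).biUnion (fun j => if π (t + j) = a₁ then
        pickedUpTo rpt π (t + j + 1) \ pickedUpTo rpt π (t + j) else ∅) := by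
  intro n
  induction n with
  | zero => intro t; simp [gSet]
  | succ n ih =>
    intro t
    rw [gSet]
    have hps : pickStep (rpt (π t)) (pickedUpTo rpt π t) = pickedUpTo rpt π (t + 1) := rfl
    rw [hps, ih (t + 1)]
    ext x
    simp only [Finset.mem_union, Finset.mem_biUnion, Finset.mem_range]
    constructor
    · rintro (hx | ⟨j, hj, hx⟩)
      · exact ⟨0, by omega, by simpa [hps] using hx⟩
      · refine ⟨j + 1, by omega, ?_⟩
        have e : t + (j + 1) = t + 1 + j := by omega
        rw [e]; exact hx
    · rintro ⟨j, hj, hx⟩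
      rcases Nat.eq_zero_or_pos j with rfl | hjpos
      · left; simpa [hps] using hx
      · right
        refine ⟨j - 1, by omega, ?_⟩
        have e : t + 1 + (j - 1) = t + j := by omega
        rw [e]; exact hx

lemma alloc_eq_gSet {A : Type*} [DecidableEq A] {m : ℕ} (a₁ : A)
    (rpt : A → Fin m ≃ Fin m) (π : ℕ → A) :
    alloc rpt π a₁ = gSet a₁ rpt π ∅ 0 m := by
  have h0 : pickedUpTo rpt π 0 = (∅ : Finset (Fin m)) := rfl
  rw [← h0, gSet_biUnion, alloc]
  simp [pickedUpTo]

/-- Utility gained by the manipulator in the next `n` steps. -/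
noncomputable def gVal {A : Type*} [DecidableEq A] {m : ℕ} (a₁ : A)
    (rpt : A → Fin m ≃ Fin m) (π : ℕ → A) (u : Fin m → ℝ)
    (T : Finset (Fin m)) (t : ℕ) : ℕ → ℝ
  | 0 => 0
  | n + 1 =>
    (if π t = a₁ then ∑ i ∈ pickStep (rpt (π t)) T \ T, u i else 0) +
      gVal a₁ rpt π u (pickStep (rpt (π t)) T) (t + 1) n

lemma sum_gSet {A : Type*} [DecidableEq A] {m : ℕ} (a₁ : A)
    (rpt : A → Fin m ≃ Fin m) (π : ℕ → A) (u : Fin m → ℝ) :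
    ∀ n T t, ∑ i ∈ gSet a₁ rpt π T t n, u i = gVal a₁ rpt π u T t n := by
  intro n
  induction n with
  | zero => intro T t; simp [gSet, gVal]
  | succ n ih =>
    intro T t
    rw [gSet, gVal, ← ih]
    rw [Finset.sum_union]
    · congr 1
      split <;> simp
    · apply Finset.disjoint_left.mpr
      intro x hx
      have hx2 : x ∈ pickStep (rpt (π t)) T := by
        split at hx
        · exact (Finset.mem_sdiff.mp hx).1
        · simp at hx
      intro hmem
      exact (Finset.mem_compl.mp (gSet_subset_compl a₁ rpt π n _ _ hmem)) hx2
section Vlemmas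
variable {A : Type*} [DecidableEq A] {m : ℕ} (a₁ : A) (rk : A → Fin m ≃ Fin m)
  (π : ℕ → A) (u : Fin m → ℝ)

lemma V_base {k : ℕ} {S : Finset (Fin m)} (h : ¬ S.card + k < m) :
    V a₁ rk π u k S = ∑ i ∈ Sᶜ, u i := by
  rw [V.eq_def, dif_neg h]

lemma V_a1 {k : ℕ} {S : Finset (Fin m)} (h : S.card + k < m)
    (hπ : π (S.card + k) = a₁) : V a₁ rk π u k S = V a₁ rk π u (k + 1) S := by
  rw [V.eq_def, dif_pos h, dif_pos hπ]

lemma V_other0 {S : Finset (Fin m)} (h : S.card < m) {a : A}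
    (ha : π S.card = a) (hπ : a ≠ a₁) (hne : Sᶜ.Nonempty) :
    V a₁ rk π u 0 S = V a₁ rk π u 0 (insert (bFun (rk a) S hne) S) := by
  subst ha
  conv_lhs => rw [V.eq_def]
  rw [dif_pos (by omega : S.card + 0 < m),
    dif_neg (show ¬ π (S.card + 0) = a₁ by simpa using hπ)]
  rfl

lemma V_other {k : ℕ} {S : Finset (Fin m)} (h : S.card + k < m) (hk : k ≠ 0)
    {a : A} (ha : π (S.card + k) = a) (hπ : a ≠ a₁) (hne : Sᶜ.Nonempty) :
    V a₁ rk π u k S =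
      max (V a₁ rk π u (k - 1) (insert (bFun (rk a) S hne) S)
            + u (bFun (rk a) S hne))
        (V a₁ rk π u k (insert (bFun (rk a) S hne) S)) := by
  subst ha
  conv_lhs => rw [V.eq_def]
  rw [dif_pos h, dif_neg hπ]
  simp only [dif_neg hk]

end Vlemmas
section PartII
variable {A : Type*} [DecidableEq A] {m : ℕ} (a₁ : A) (rk : A → Fin m ≃ Fin m)
  (π : ℕ → A) (u : Fin m → ℝ) (r : Fin m ≃ Fin m)

lemma partII_base (rpt : A → Fin m ≃ Fin m) (U : Finset (Fin m))
    (hU : U ⊆ pickedUpTo rpt π m) :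
    gVal a₁ rpt π u (pickedUpTo rpt π m) m (m - m) + ∑ i ∈ U, u i ≤
      V a₁ rk π u U.card (pickedUpTo rpt π m \ U) := by
  have hcard : (pickedUpTo rpt π m).card = m := card_pickedUpTo rpt π m le_rfl
  have huniv : pickedUpTo rpt π m = Finset.univ := by
    apply Finset.eq_univ_of_card
    simp [hcard]
  have hUcard : U.card ≤ m := by
    calc U.card ≤ (pickedUpTo rpt π m).card := Finset.card_le_card hU
    _ = m := hcard
  have hcard2 : (pickedUpTo rpt π m \ U).card = m - U.card := by
    rw [Finset.card_sdiff_of_subset hU, hcard]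
  rw [V_base a₁ rk π u (by omega)]
  have hcompl : (pickedUpTo rpt π m \ U)ᶜ = U := by
    rw [huniv, ← Finset.compl_eq_univ_sdiff, compl_compl]
  rw [hcompl]
  simp [Nat.sub_self, gVal]

lemma partII (rpt : A → Fin m ≃ Fin m) (hrpt : ∀ a, a ≠ a₁ → rpt a = rk a) :
    ∀ n t U, 2 * (m - t) + U.card ≤ n → t ≤ m → U ⊆ pickedUpTo rpt π t →
    gVal a₁ rpt π u (pickedUpTo rpt π t) t (m - t) + ∑ i ∈ U, u i ≤
      V a₁ rk π u U.card (pickedUpTo rpt π t \ U) := by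
  intro n
  induction n with
  | zero =>
    intro t U hn htm hU
    have ht : t = m := by omega
    subst ht
    exact partII_base a₁ rk π u rpt U hU
  | succ n ih =>
    intro t U hn htm hU
    rcases eq_or_lt_of_le htm with rfl | htm'
    · exact partII_base a₁ rk π u rpt U hU
    set R := pickedUpTo rpt π t with hR
    have hRcard : R.card = t := card_pickedUpTo rpt π t htm
    have hne : Rᶜ.Nonempty := compl_nonempty_of_card (by omega)
    have hUcard : U.card ≤ t := hRcard ▸ Finset.card_le_card hU
    have hpos' : (R \ U).card + U.card = t := by
      rw [Finset.card_sdiff_of_subset hU, hRcard]; omega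
    have hmt : m - t = (m - t - 1) + 1 := by omega
    have hps : pickStep (rpt (π t)) R = pickedUpTo rpt π (t + 1) := rfl
    by_cases hπ : π t = a₁
    · -- manipulator's turn
      set i := bFun (rpt (π t)) R hne with hi
      have hpse : pickStep (rpt (π t)) R = insert i R := pickStep_eq _ _ hne
      have hiR : i ∉ R := bFun_not_mem _ _ _
      have hiU : i ∉ U := fun h => hiR (hU h)
      have hdiff : pickStep (rpt (π t)) R \ R = {i} := by
        rw [hpse]
        ext x
        simp only [Finset.mem_sdiff, Finset.mem_insert, Finset.mem_singleton]
        constructor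
        · rintro ⟨h1 | h1, h2⟩ 
          · exact h1
          · exact absurd h1 h2
        · rintro rfl; exact ⟨Or.inl rfl, hiR⟩
      have hgv : gVal a₁ rpt π u R t (m - t) =
          u i + gVal a₁ rpt π u (pickedUpTo rpt π (t+1)) (t+1) (m - t - 1) := by
        rw [hmt, gVal, if_pos hπ, hdiff, ← hps]
        simp
      have hstep : pickedUpTo rpt π (t + 1) = insert i R := by rw [← hps, hpse]
      have hU' : insert i U ⊆ pickedUpTo rpt π (t + 1) := by
        rw [hstep]
        exact Finset.insert_subset_insert _ hU
      have hcardU' : (insert i U).card = U.card + 1 := Finset.card_insert_of_notMem hiU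
      have hsd : pickedUpTo rpt π (t + 1) \ insert i U = R \ U := by
        rw [hstep]
        ext x
        simp only [Finset.mem_sdiff, Finset.mem_insert, not_or]
        constructor
        · rintro ⟨h1 | h1, h2, h3⟩
          · exact absurd h1 h2
          · exact ⟨h1, h3⟩
        · rintro ⟨h1, h2⟩
          exact ⟨Or.inr h1, fun h => hiR (h ▸ h1), h2⟩
      have hVs : V a₁ rk π u U.card (R \ U) = V a₁ rk π u (U.card + 1) (R \ U) := by
        apply V_a1 a₁ rk π u (by omega)
        rw [hpos']; exact hπ
      have := ih (t + 1) (insert i U) (by omega) (by omega) hU'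
      rw [hcardU', hsd, Finset.sum_insert hiU] at this
      have hmm : m - (t + 1) = m - t - 1 := by omega
      rw [hmm] at this
      rw [hgv, hVs]
      linarith
    · -- another agent's turn
      have hrk : rpt (π t) = rk (π t) := hrpt _ hπ
      have hgv : gVal a₁ rpt π u R t (m - t) =
          gVal a₁ rpt π u (pickedUpTo rpt π (t+1)) (t+1) (m - t - 1) := by
        rw [hmt, gVal, if_neg hπ, ← hps]
        simp
      have hne' : (R \ U)ᶜ.Nonempty := by
        apply compl_nonempty_of_card
        omega
      set bV := bFun (rk (π t)) (R \ U) hne' with hbV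
      by_cases hbU : bV ∈ U
      · -- the manipulator uses a banked pick on bV
        have hUne : U.Nonempty := ⟨bV, hbU⟩
        have hUk : U.card ≠ 0 := by simp [Finset.card_ne_zero_of_mem hbU]
        have hbVR : bV ∈ R := hU hbU
        have hins : insert bV (R \ U) = R \ U.erase bV := by
          ext x
          simp only [Finset.mem_insert, Finset.mem_sdiff, Finset.mem_erase, not_and]
          constructor
          · rintro (rfl | ⟨h1, h2⟩)
            · exact ⟨hbVR, fun h => absurd rfl h⟩
            · exact ⟨h1, fun _ => h2⟩
          · rintro ⟨h1, h2⟩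
            by_cases hx : x = bV
            · exact Or.inl hx
            · exact Or.inr ⟨h1, fun h => (h2 hx) h⟩
        have hVo := V_other a₁ rk π u (S := R \ U) (k := U.card) (by omega) hUk
            (a := π t) (by rw [hpos']) hπ hne'
        have herase : (U.erase bV).card = U.card - 1 := Finset.card_erase_of_mem hbU
        have := ih t (U.erase bV) (by omega) (by omega)
            ((Finset.erase_subset _ _).trans hU)
        rw [herase] at this
        have hsum : ∑ i ∈ U, u i = u bV + ∑ i ∈ U.erase bV, u i :=
          (Finset.add_sum_erase U u hbU).symm
        rw [hVo]
        have h1 : gVal a₁ rpt π u R t (m - t) + ∑ i ∈ U, u i ≤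
            V a₁ rk π u (U.card - 1) (insert bV (R \ U)) + u bV := by
          rw [hins, hsum]
          linarith
        exact h1.trans (le_max_left _ _)
      · -- defer: the other agent's best item is still available in reality
        have hbVR : bV ∉ R := by
          have := bFun_mem_compl (rk (π t)) (R \ U) hne'
          rw [Finset.mem_compl, Finset.mem_sdiff] at this
          intro h
          exact this ⟨h, hbU⟩
        have hbR : bFun (rk (π t)) R hne = bV := by
          apply bFun_subset (rk (π t)) (Finset.sdiff_subset) hne' hne
          rwa [Finset.mem_compl]
        have hstep : pickedUpTo rpt π (t + 1) = insert bV R := by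
          rw [← hps, hrk, pickStep_eq _ _ hne, hbR]
        have hins : insert bV (R \ U) = pickedUpTo rpt π (t + 1) \ U := by
          rw [hstep]
          ext x
          simp only [Finset.mem_insert, Finset.mem_sdiff]
          constructor
          · rintro (rfl | ⟨h1, h2⟩)
            · exact ⟨Or.inl rfl, hbU⟩
            · exact ⟨Or.inr h1, h2⟩
          · rintro ⟨h1 | h1, h2⟩
            · exact Or.inl h1
            · exact Or.inr ⟨h1, h2⟩
        have hU' : U ⊆ pickedUpTo rpt π (t + 1) := by
          rw [hstep]
          exact hU.trans (Finset.subset_insert _ _)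
        have hIH := ih (t + 1) U (by omega) (by omega) hU'
        have hmm : m - (t + 1) = m - t - 1 := by omega
        rw [hmm] at hIH
        have hVineq : V a₁ rk π u U.card (insert bV (R \ U)) ≤
            V a₁ rk π u U.card (R \ U) := by
          by_cases hUk : U.card = 0
          · rw [hUk]
            have h0 : V a₁ rk π u 0 (R \ U) =
                V a₁ rk π u 0 (insert bV (R \ U)) :=
              V_other0 a₁ rk π u (by omega) (a := π t)
                (by have hc : (R \ U).card = t := by omega
                    rw [hc]) hπ hne'
            rw [h0]
          · have hVo := V_other a₁ rk π u (S := R \ U) (k := U.card) (by omega) hUk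
              (a := π t) (by rw [hpos']) hπ hne'
            rw [hVo]
            exact le_max_right _ _
        rw [hgv]
        calc gVal a₁ rpt π u (pickedUpTo rpt π (t+1)) (t+1) (m - t - 1) + ∑ i ∈ U, u i
            ≤ V a₁ rk π u U.card (pickedUpTo rpt π (t + 1) \ U) := hIH
          _ = V a₁ rk π u U.card (insert bV (R \ U)) := by rw [hins]
          _ ≤ V a₁ rk π u U.card (R \ U) := hVineq

end PartII
open Classical in
/-- The optimal list of future picks of the manipulator, read off from the DP. -/
noncomputable def Lpick {A : Type*} [DecidableEq A] {m : ℕ} (a₁ : A)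
    (rk : A → Fin m ≃ Fin m) (π : ℕ → A) (u : Fin m → ℝ)
    (k : ℕ) (S : Finset (Fin m)) : List (Fin m) :=
  if hlt : S.card + k < m then
    if π (S.card + k) = a₁ then
      Lpick a₁ rk π u (k + 1) S
    else
      have hne : Sᶜ.Nonempty := compl_nonempty_of_card (by omega)
      if hk : k = 0 then
        Lpick a₁ rk π u 0 (insert (bFun (rk (π (S.card + k))) S hne) S)
      else
        if V a₁ rk π u k (insert (bFun (rk (π (S.card + k))) S hne) S) ≤
            V a₁ rk π u (k - 1) (insert (bFun (rk (π (S.card + k))) S hne) S)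
              + u (bFun (rk (π (S.card + k))) S hne) then
          (bFun (rk (π (S.card + k))) S hne) ::
            Lpick a₁ rk π u (k - 1) (insert (bFun (rk (π (S.card + k))) S hne) S)
        else
          Lpick a₁ rk π u k (insert (bFun (rk (π (S.card + k))) S hne) S)
  else Sᶜ.sort (· ≤ ·)
termination_by (m - (S.card + k), k)
decreasing_by
  · apply Prod.Lex.left
    omega
  · apply Prod.Lex.left
    rw [Finset.card_insert_of_notMem (bFun_not_mem _ _ _)]
    omega
  · have hcard : (insert (bFun (rk (π (S.card + k))) S hne) S).card + (k - 1)
        = S.card + k := by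
      rw [Finset.card_insert_of_notMem (bFun_not_mem _ _ _)]
      omega
    rw [hcard]
    exact Prod.Lex.right _ (by omega)
  · apply Prod.Lex.left
    rw [Finset.card_insert_of_notMem (bFun_not_mem _ _ _)]
    omega

section Llemmas
variable {A : Type*} [DecidableEq A] {m : ℕ} (a₁ : A) (rk : A → Fin m ≃ Fin m)
  (π : ℕ → A) (u : Fin m → ℝ)

lemma Lpick_base {k : ℕ} {S : Finset (Fin m)} (h : ¬ S.card + k < m) :
    Lpick a₁ rk π u k S = Sᶜ.sort (· ≤ ·) := by
  rw [Lpick.eq_def, dif_neg h]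

lemma Lpick_a1 {k : ℕ} {S : Finset (Fin m)} (h : S.card + k < m)
    (hπ : π (S.card + k) = a₁) :
    Lpick a₁ rk π u k S = Lpick a₁ rk π u (k + 1) S := by
  rw [Lpick.eq_def, dif_pos h, if_pos hπ]

lemma Lpick_other0 {S : Finset (Fin m)} (h : S.card < m) {a : A}
    (ha : π S.card = a) (hπ : a ≠ a₁) (hne : Sᶜ.Nonempty) :
    Lpick a₁ rk π u 0 S = Lpick a₁ rk π u 0 (insert (bFun (rk a) S hne) S) := by
  subst ha
  conv_lhs => rw [Lpick.eq_def]
  rw [dif_pos (by omega : S.card + 0 < m),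
    if_neg (show ¬ π (S.card + 0) = a₁ by simpa using hπ)]
  rfl

lemma Lpick_cons {k : ℕ} {S : Finset (Fin m)} (h : S.card + k < m) (hk : k ≠ 0)
    {a : A} (ha : π (S.card + k) = a) (hπ : a ≠ a₁) (hne : Sᶜ.Nonempty)
    (hcond : V a₁ rk π u k (insert (bFun (rk a) S hne) S) ≤
      V a₁ rk π u (k - 1) (insert (bFun (rk a) S hne) S) + u (bFun (rk a) S hne)) :
    Lpick a₁ rk π u k S =
      (bFun (rk a) S hne) :: Lpick a₁ rk π u (k - 1) (insert (bFun (rk a) S hne) S) := by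
  subst ha
  conv_lhs => rw [Lpick.eq_def]
  rw [dif_pos h, if_neg hπ]
  simp only [dif_neg hk]
  rw [if_pos hcond]

lemma Lpick_skip {k : ℕ} {S : Finset (Fin m)} (h : S.card + k < m) (hk : k ≠ 0)
    {a : A} (ha : π (S.card + k) = a) (hπ : a ≠ a₁) (hne : Sᶜ.Nonempty)
    (hcond : ¬ (V a₁ rk π u k (insert (bFun (rk a) S hne) S) ≤
      V a₁ rk π u (k - 1) (insert (bFun (rk a) S hne) S) + u (bFun (rk a) S hne))) :
    Lpick a₁ rk π u k S = Lpick a₁ rk π u k (insert (bFun (rk a) S hne) S) := by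
  subst ha
  conv_lhs => rw [Lpick.eq_def]
  rw [dif_pos h, if_neg hπ]
  simp only [dif_neg hk]
  rw [if_neg hcond]

end Llemmas
section Lfacts
variable {A : Type*} [DecidableEq A] {m : ℕ} (a₁ : A) (rk : A → Fin m ≃ Fin m)
  (π : ℕ → A) (u : Fin m → ℝ)

lemma Lfacts : ∀ n k (S : Finset (Fin m)), m - (S.card + k) ≤ n → S.card + k ≤ m →
    (Lpick a₁ rk π u k S).Nodup ∧ (∀ x ∈ Lpick a₁ rk π u k S, x ∉ S) ∧
      k ≤ (Lpick a₁ rk π u k S).length ∧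
      ((Lpick a₁ rk π u k S).map u).sum = V a₁ rk π u k S ∧
      (S.card + k = m → (Lpick a₁ rk π u k S).length = k) := by
  intro n
  induction n with
  | zero =>
    intro k S hn hkm
    have hm : ¬ S.card + k < m := by omega
    have heq : S.card + k = m := by omega
    rw [Lpick_base a₁ rk π u hm, V_base a₁ rk π u hm]
    refine ⟨Finset.sort_nodup _ _, ?_, ?_, ?_, ?_⟩
    · intro x hx
      have := (Finset.mem_sort (α := Fin m) (· ≤ ·)).mp hx
      exact Finset.mem_compl.mp this
    · rw [Finset.length_sort, Finset.card_compl, Fintype.card_fin]; omega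
    · rw [← List.sum_toFinset _ (Finset.sort_nodup _ _), Finset.sort_toFinset]
    · intro _
      rw [Finset.length_sort, Finset.card_compl, Fintype.card_fin]; omega
  | succ n ihn =>
    intro k
    induction k using Nat.strong_induction_on with
    | _ k ihk =>
      intro S hn hkm
      by_cases hlt : S.card + k < m
      · by_cases hπ : π (S.card + k) = a₁
        · rw [Lpick_a1 a₁ rk π u hlt hπ, V_a1 a₁ rk π u hlt hπ]
          have := ihn (k + 1) S (by omega) (by omega)
          exact ⟨this.1, this.2.1, le_trans (by omega) this.2.2.1,
            this.2.2.2.1, fun h => by omega⟩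
        · have hne : Sᶜ.Nonempty := compl_nonempty_of_card (by omega)
          set b := bFun (rk (π (S.card + k))) S hne with hb
          have hbS : b ∉ S := bFun_not_mem _ _ _
          have hcard : (insert b S).card = S.card + 1 :=
            Finset.card_insert_of_notMem hbS
          by_cases hk : k = 0
          · subst hk
            rw [Lpick_other0 a₁ rk π u (by omega) (by simp) hπ hne,
              V_other0 a₁ rk π u (by omega) (by simp) hπ hne]
            have := ihn 0 (insert b S) (by omega) (by omega)
            refine ⟨this.1, ?_, this.2.2.1, this.2.2.2.1, fun h => by omega⟩
            intro x hx hxS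
            exact this.2.1 x hx (Finset.mem_insert_of_mem hxS)
          · by_cases hcond : V a₁ rk π u k (insert b S) ≤
                V a₁ rk π u (k - 1) (insert b S) + u b
            · rw [Lpick_cons a₁ rk π u hlt hk rfl hπ hne hcond,
                V_other a₁ rk π u hlt hk rfl hπ hne]
              rw [← hb]
              have hIH := ihk (k - 1) (by omega) (insert b S) (by omega) (by omega)
              have hmax : max (V a₁ rk π u (k - 1) (insert b S) + u b)
                  (V a₁ rk π u k (insert b S)) =
                  V a₁ rk π u (k - 1) (insert b S) + u b := max_eq_left hcond
              refine ⟨?_, ?_, ?_, ?_, fun h => by omega⟩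
              · rw [List.nodup_cons]
                exact ⟨fun h => hIH.2.1 b h (Finset.mem_insert_self _ _), hIH.1⟩
              · intro x hx hxS
                rcases List.mem_cons.mp hx with rfl | hx'
                · exact hbS hxS
                · exact hIH.2.1 x hx' (Finset.mem_insert_of_mem hxS)
              · have := hIH.2.2.1
                simp only [List.length_cons]
                omega
              · rw [hmax, List.map_cons, List.sum_cons, hIH.2.2.2.1]
                ring
            · rw [Lpick_skip a₁ rk π u hlt hk rfl hπ hne hcond,
                V_other a₁ rk π u hlt hk rfl hπ hne]
              rw [← hb]
              have hIH := ihn k (insert b S) (by omega) (by omega)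
              have hmax : max (V a₁ rk π u (k - 1) (insert b S) + u b)
                  (V a₁ rk π u k (insert b S)) = V a₁ rk π u k (insert b S) :=
                max_eq_right (le_of_lt (lt_of_not_ge hcond))
              refine ⟨hIH.1, ?_, hIH.2.2.1, by rw [hmax]; exact hIH.2.2.2.1,
                fun h => by omega⟩
              intro x hx hxS
              exact hIH.2.1 x hx (Finset.mem_insert_of_mem hxS)
      · have heq : S.card + k = m := by omega
        rw [Lpick_base a₁ rk π u hlt, V_base a₁ rk π u hlt]
        refine ⟨Finset.sort_nodup _ _, ?_, ?_, ?_, ?_⟩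
        · intro x hx
          exact Finset.mem_compl.mp ((Finset.mem_sort (α := Fin m) (· ≤ ·)).mp hx)
        · rw [Finset.length_sort, Finset.card_compl, Fintype.card_fin]; omega
        · rw [← List.sum_toFinset _ (Finset.sort_nodup _ _), Finset.sort_toFinset]
        · intro _
          rw [Finset.length_sort, Finset.card_compl, Fintype.card_fin]; omega

end Lfacts
section RankFromList
variable {m : ℕ}

lemma nodup_getElem_not_mem_take {α : Type*} {l : List α} (h : l.Nodup) {k : ℕ}
    (hk : k < l.length) : l[k] ∉ l.take k := by
  intro hmem
  obtain ⟨i, hi, hie⟩ := List.mem_iff_getElem.mp hmem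
  have hi' : i < l.length := by
    have := hi
    rw [List.length_take] at this
    omega
  rw [List.getElem_take] at hie
  have := (h.getElem_inj_iff (hi := hi') (hj := hk)).mp hie
  rw [List.length_take] at hi
  omega

/-- The full preference list extending `L0`. -/
def fullList (L0 : List (Fin m)) : List (Fin m) :=
  L0 ++ (Finset.univ \ L0.toFinset).sort (· ≤ ·)

lemma fullList_nodup {L0 : List (Fin m)} (h : L0.Nodup) : (fullList L0).Nodup := by
  refine h.append (Finset.sort_nodup _ _) ?_
  rw [List.disjoint_left]
  intro a ha hb
  have := (Finset.mem_sort (α := Fin m) (· ≤ ·)).mp hb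
  rw [Finset.mem_sdiff] at this
  exact this.2 (List.mem_toFinset.mpr ha)

lemma length_le_of_nodup {L0 : List (Fin m)} (h : L0.Nodup) : L0.length ≤ m := by
  rw [← List.toFinset_card_of_nodup h]
  have := Finset.card_le_card (Finset.subset_univ L0.toFinset)
  simpa using this

lemma fullList_length {L0 : List (Fin m)} (h : L0.Nodup) :
    (fullList L0).length = m := by
  rw [fullList, List.length_append, Finset.length_sort, Finset.card_sdiff_of_subset
    (Finset.subset_univ _), Finset.card_univ, Fintype.card_fin,
    List.toFinset_card_of_nodup h]
  have := length_le_of_nodup h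
  omega

/-- The reported ranking realizing the list `L0` as top choices. -/
noncomputable def rankOf (L0 : List (Fin m)) (h : L0.Nodup) : Fin m ≃ Fin m :=
  (Equiv.ofBijective (fun j : Fin m => (fullList L0).get (Fin.cast (fullList_length h).symm j))
    (Finite.injective_iff_bijective.mp (fun a b hab => by
      have hinj := List.nodup_iff_injective_get.mp (fullList_nodup h)
      have := hinj hab
      exact Fin.cast_injective _ this))).symm

lemma rankOf_symm_apply (L0 : List (Fin m)) (h : L0.Nodup) (j : Fin m) :
    (rankOf L0 h).symm j = (fullList L0).get (Fin.cast (fullList_length h).symm j) := rfl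

lemma rankOf_symm_eq_getElem (L0 : List (Fin m)) (h : L0.Nodup) (q : ℕ)
    (hq : q < L0.length) (hqm : q < m) :
    (rankOf L0 h).symm ⟨q, hqm⟩ = L0[q] := by
  rw [rankOf_symm_apply]
  simp only [List.get_eq_getElem]
  exact List.getElem_append_left hq

lemma rankOf_key (L0 : List (Fin m)) (h : L0.Nodup) (p : ℕ) (hp : p < L0.length)
    (S : Finset (Fin m)) (hne : Sᶜ.Nonempty)
    (hmem : L0[p] ∈ Sᶜ)
    (hbefore : ∀ q (hq : q < p), L0[q]'(by omega) ∉ Sᶜ) :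
    bFun (rankOf L0 h) S hne = L0[p] := by
  set r := rankOf L0 h with hr
  have hpm : p < m := lt_of_lt_of_le hp (length_le_of_nodup h)
  set y := bFun r S hne with hy
  have hyS : y ∈ Sᶜ := bFun_mem_compl _ _ _
  have hrx : r L0[p] = ⟨p, hpm⟩ := by
    rw [Equiv.apply_eq_iff_eq_symm_apply]
    exact (rankOf_symm_eq_getElem L0 h p hp hpm).symm
  have hmin : r y ≤ r L0[p] := bFun_min r S hne _ hmem
  rw [hrx] at hmin
  have hylt : ¬ ((r y : Fin m) : ℕ) < p := by
    intro hlt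
    have hq : ((r y : Fin m) : ℕ) < L0.length := by omega
    have : y = L0[((r y : Fin m) : ℕ)] := by
      have := rankOf_symm_eq_getElem L0 h ((r y : Fin m) : ℕ) hq (by omega)
      rw [← this]
      have h2 : (⟨((r y : Fin m) : ℕ), by omega⟩ : Fin m) = r y := by
        apply Fin.ext; rfl
      rw [h2, Equiv.symm_apply_apply]
    exact hbefore _ hlt (by rw [← this]; exact hyS)
  have hre : r y = ⟨p, hpm⟩ := by
    apply Fin.ext
    have : ((r y : Fin m) : ℕ) ≤ p := hmin
    simpa using le_antisymm this (le_of_not_gt hylt)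
  have : y = r.symm ⟨p, hpm⟩ := by rw [← hre, Equiv.symm_apply_apply]
  rw [this, rankOf_symm_eq_getElem L0 h p hp hpm]

end RankFromList
lemma drop_pred_cons {α : Type*} (a : α) (l : List α) {k : ℕ} (hk : k ≠ 0) :
    (a :: l).drop k = l.drop (k - 1) := by
  obtain ⟨k', rfl⟩ := Nat.exists_eq_succ_of_ne_zero hk
  simp [List.drop_succ_cons]

lemma take_pred_cons {α : Type*} (a : α) (l : List α) {k : ℕ} (hk : k ≠ 0) :
    (a :: l).take k = a :: l.take (k - 1) := by
  obtain ⟨k', rfl⟩ := Nat.exists_eq_succ_of_ne_zero hk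
  simp [List.take_succ_cons]

section Sim
variable {A : Type*} [DecidableEq A] {m : ℕ} (a₁ : A) (rk : A → Fin m ≃ Fin m)
  (π : ℕ → A) (u : Fin m → ℝ) (L0 : List (Fin m)) (hnd : L0.Nodup)

lemma partIII_sim :
    ∀ n, ∀ k (S : Finset (Fin m)) (j : ℕ),
    m - (S.card + k) ≤ n → S.card + k ≤ m →
    L0.drop j = Lpick a₁ rk π u k S →
    (∀ x ∈ L0.take j, x ∈ S) →
    ∀ x ∈ (Lpick a₁ rk π u k S).drop k,
      x ∈ gSet a₁ (Function.update rk a₁ (rankOf L0 hnd)) π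
        (S ∪ ((Lpick a₁ rk π u k S).take k).toFinset) (S.card + k)
        (m - (S.card + k)) := by
  have hbase : ∀ k (S : Finset (Fin m)), ¬ S.card + k < m → S.card + k ≤ m →
      ∀ x ∈ (Lpick a₁ rk π u k S).drop k, x ∈ gSet a₁
        (Function.update rk a₁ (rankOf L0 hnd)) π
        (S ∪ ((Lpick a₁ rk π u k S).take k).toFinset) (S.card + k)
        (m - (S.card + k)) := by
    intro k S hlt hkm
    have LF := Lfacts a₁ rk π u m k S (by omega) hkm
    have hnil : (Lpick a₁ rk π u k S).drop k = [] :=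
      List.drop_eq_nil_of_le (by have := LF.2.2.2.2 (by omega); omega)
    rw [hnil]
    intro x hx
    simp at hx
  intro n
  induction n with
  | zero =>
    intro k S j hn hkm hdrop hpre
    exact hbase k S (by omega) hkm
  | succ n ihn =>
    intro k
    induction k using Nat.strong_induction_on with
    | _ k ihk =>
      intro S j hn hkm hdrop hpre
      by_cases hlt : S.card + k < m
      · have LF := Lfacts a₁ rk π u m k S (by omega) (by omega)
        have hTcard : (S ∪ ((Lpick a₁ rk π u k S).take k).toFinset).card < m := by
          calc (S ∪ ((Lpick a₁ rk π u k S).take k).toFinset).card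
              ≤ S.card + ((Lpick a₁ rk π u k S).take k).toFinset.card :=
                Finset.card_union_le _ _
            _ ≤ S.card + ((Lpick a₁ rk π u k S).take k).length := by
                have := List.toFinset_card_le ((Lpick a₁ rk π u k S).take k)
                omega
            _ ≤ S.card + k := by
                have := List.length_take_le k (Lpick a₁ rk π u k S)
                omega
            _ < m := hlt
        have hTne : (S ∪ ((Lpick a₁ rk π u k S).take k).toFinset)ᶜ.Nonempty :=
          compl_nonempty_of_card hTcard
        have hmt : m - (S.card + k) = (m - (S.card + k) - 1) + 1 := by omega
        by_cases hπ : π (S.card + k) = a₁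
        · -- the manipulator's turn
          have hLL : Lpick a₁ rk π u k S = Lpick a₁ rk π u (k + 1) S :=
            Lpick_a1 a₁ rk π u hlt hπ
          have LF2 := Lfacts a₁ rk π u m (k + 1) S (by omega) (by omega)
          have hklen : k + 1 ≤ (Lpick a₁ rk π u k S).length := by
            rw [hLL]; exact LF2.2.2.1
          have hlen0 : L0.length - j = (Lpick a₁ rk π u k S).length := by
            rw [← hdrop]; simp
          have hplen : j + k < L0.length := by omega
          have hkLL : k < (Lpick a₁ rk π u k S).length := by omega
          have hget : (Lpick a₁ rk π u k S)[k]'hkLL = L0[j + k]'hplen := by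
            have h1 : (L0.drop j)[k]'(by rw [hdrop]; exact hkLL) = L0[j + k]'hplen :=
              List.getElem_drop
            rw [← h1]
            simp only [hdrop]
          have hmemT : (Lpick a₁ rk π u k S)[k]'hkLL
              ∉ S ∪ ((Lpick a₁ rk π u k S).take k).toFinset := by
            intro hmem
            rcases Finset.mem_union.mp hmem with h1 | h1
            · exact LF.2.1 _ (List.getElem_mem _) h1
            · exact nodup_getElem_not_mem_take LF.1 hkLL (List.mem_toFinset.mp h1)
          have hpick : bFun (rankOf L0 hnd)
              (S ∪ ((Lpick a₁ rk π u k S).take k).toFinset) hTne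
              = (Lpick a₁ rk π u k S)[k]'hkLL := by
            rw [hget]
            apply rankOf_key L0 hnd (j + k) hplen _ hTne
            · rw [Finset.mem_compl, ← hget]
              exact hmemT
            · intro q hq
              simp only [Finset.mem_compl, not_not]
              by_cases hqj : q < j
              · apply Finset.mem_union_left
                apply hpre
                exact List.mem_iff_getElem.mpr ⟨q, by rw [List.length_take]; omega,
                  List.getElem_take⟩
              · apply Finset.mem_union_right
                rw [List.mem_toFinset]
                have hq2 : q - j < k := by omega
                have hq3 : q - j < (Lpick a₁ rk π u k S).length := by omega
                have hgq : (Lpick a₁ rk π u k S)[q - j]'hq3 = L0[q]'(by omega) := by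
                  have h1 : (L0.drop j)[q - j]'(by rw [hdrop]; exact hq3)
                      = L0[j + (q - j)]'(by omega) := List.getElem_drop
                  simp only [hdrop] at h1
                  rw [h1]
                  simp only [show j + (q - j) = q from by omega]
                rw [← hgq]
                exact List.mem_iff_getElem.mpr ⟨q - j, by
                  rw [List.length_take]; omega, List.getElem_take⟩
          rw [hmt]
          intro x hx
          rw [gSet]
          have hup : Function.update rk a₁ (rankOf L0 hnd) (π (S.card + k))
              = rankOf L0 hnd := by rw [hπ, Function.update_self]
          rw [hup, if_pos hπ, pickStep_eq _ _ hTne, hpick]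
          rw [← List.getElem_cons_drop hkLL] at hx
          rcases List.mem_cons.mp hx with rfl | hx'
          · apply Finset.mem_union_left
            rw [Finset.mem_sdiff]
            exact ⟨Finset.mem_insert_self _ _, hmemT⟩
          · apply Finset.mem_union_right
            have hdrop' : L0.drop j = Lpick a₁ rk π u (k + 1) S := by
              rw [← hLL]; exact hdrop
            have hIH := ihn (k + 1) S j (by omega) (by omega) hdrop' hpre x
              (by rw [← hLL]; exact hx')
            have htake : ((Lpick a₁ rk π u k S).take (k + 1)).toFinset
                = insert ((Lpick a₁ rk π u k S)[k]'hkLL)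
                    ((Lpick a₁ rk π u k S).take k).toFinset := by
              rw [← List.take_concat_get hkLL, List.concat_eq_append,
                List.toFinset_append]
              ext y
              simp [or_comm]
            have hset : S ∪ ((Lpick a₁ rk π u (k + 1) S).take (k + 1)).toFinset
                = insert ((Lpick a₁ rk π u k S)[k]'hkLL)
                    (S ∪ ((Lpick a₁ rk π u k S).take k).toFinset) := by
              rw [← hLL, htake, Finset.union_insert]
            have he1 : S.card + (k + 1) = S.card + k + 1 := by omega
            have he2 : m - (S.card + (k + 1)) = m - (S.card + k) - 1 := by omega
            rw [hset, he2, he1] at hIH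
            exact hIH
        · -- another agent's turn
          have hSne : Sᶜ.Nonempty := compl_nonempty_of_card (by omega)
          have hbS : bFun (rk (π (S.card + k))) S hSne ∉ S := bFun_not_mem _ _ _
          have hbcard : (insert (bFun (rk (π (S.card + k))) S hSne) S).card
              = S.card + 1 := Finset.card_insert_of_notMem hbS
          have hup : Function.update rk a₁ (rankOf L0 hnd) (π (S.card + k))
              = rk (π (S.card + k)) := Function.update_of_ne hπ _ _
          by_cases hk : k = 0
          · subst hk
            have hLL : Lpick a₁ rk π u 0 S
                = Lpick a₁ rk π u 0 (insert (bFun (rk (π (S.card + 0))) S hSne) S) := by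
              have := Lpick_other0 a₁ rk π u (by omega) (a := π (S.card + 0))
                (by simp) hπ hSne
              simpa using this
            rw [hmt]
            intro x hx
            rw [gSet, if_neg hπ, hup]
            apply Finset.mem_union_right
            have hps : pickStep (rk (π (S.card + 0)))
                (S ∪ ((Lpick a₁ rk π u 0 S).take 0).toFinset)
                = insert (bFun (rk (π (S.card + 0))) S hSne) S := by
              simp only [List.take_zero, List.toFinset_nil, Finset.union_empty]
              rw [pickStep_eq _ _ hSne]
            rw [hps]
            have hdrop2 : L0.drop j
                = Lpick a₁ rk π u 0 (insert (bFun (rk (π (S.card + 0))) S hSne) S) := by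
              rw [← hLL]; exact hdrop
            have hIH := ihn 0 (insert (bFun (rk (π (S.card + 0))) S hSne) S) j
              (by omega) (by omega) hdrop2
              (fun y hy => Finset.mem_insert_of_mem (hpre y hy)) x
              (by rw [← hLL]; simpa using hx)
            rw [hbcard] at hIH
            simp only [List.take_zero, List.toFinset_nil, Finset.union_empty] at hIH
            have he2 : m - (S.card + 1 + 0) = m - (S.card + 0) - 1 := by omega
            have he3 : S.card + 1 + 0 = S.card + 0 + 1 := by omega
            rw [he2, he3] at hIH
            exact hIH
          · by_cases hcond : V a₁ rk π u k
                (insert (bFun (rk (π (S.card + k))) S hSne) S) ≤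
                V a₁ rk π u (k - 1) (insert (bFun (rk (π (S.card + k))) S hSne) S)
                  + u (bFun (rk (π (S.card + k))) S hSne)
            · -- the DP uses a banked pick on b
              have hLL : Lpick a₁ rk π u k S
                  = (bFun (rk (π (S.card + k))) S hSne) ::
                    Lpick a₁ rk π u (k - 1)
                      (insert (bFun (rk (π (S.card + k))) S hSne) S) :=
                Lpick_cons a₁ rk π u hlt hk rfl hπ hSne hcond
              have hjlt : j < L0.length := by
                by_contra hcon
                have hnil : L0.drop j = [] := List.drop_eq_nil_of_le (by omega)
                rw [hnil, hLL] at hdrop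
                exact List.cons_ne_nil _ _ hdrop.symm
              have hdrop' : L0.drop (j + 1)
                  = Lpick a₁ rk π u (k - 1)
                      (insert (bFun (rk (π (S.card + k))) S hSne) S) := by
                have h1 : L0.drop (j + 1) = (L0.drop j).drop 1 := by
                  rw [List.drop_drop]
                rw [h1, hdrop, hLL]
                rfl
              have hL0j : L0[j]'hjlt = bFun (rk (π (S.card + k))) S hSne := by
                have h1 : (L0.drop j)[0]'(by rw [hdrop, hLL]; simp)
                    = L0[j + 0]'(by omega) := List.getElem_drop
                have h2 : (L0.drop j)[0]'(by rw [hdrop, hLL]; simp)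
                    = bFun (rk (π (S.card + k))) S hSne := by
                  simp only [hdrop, hLL]
                  rfl
                rw [h2] at h1
                simp only [Nat.add_zero] at h1
                exact h1.symm
              have hpre' : ∀ x ∈ L0.take (j + 1),
                  x ∈ insert (bFun (rk (π (S.card + k))) S hSne) S := by
                intro x hx
                rw [← List.take_concat_get hjlt, List.concat_eq_append] at hx
                rcases List.mem_append.mp hx with h1 | h1
                · exact Finset.mem_insert_of_mem (hpre x h1)
                · rw [List.mem_singleton] at h1
                  rw [h1, hL0j]
                  exact Finset.mem_insert_self _ _
              have hIH := ihk (k - 1) (by omega)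
                (insert (bFun (rk (π (S.card + k))) S hSne) S) (j + 1)
                (by omega) (by omega) hdrop' hpre'
              have hk1 : k - 1 + 1 = k := by omega
              intro x hx
              have hx' : x ∈ (Lpick a₁ rk π u (k - 1)
                  (insert (bFun (rk (π (S.card + k))) S hSne) S)).drop (k - 1) := by
                rw [hLL, drop_pred_cons _ _ hk] at hx
                exact hx
              have hset : insert (bFun (rk (π (S.card + k))) S hSne) S ∪
                  ((Lpick a₁ rk π u (k - 1)
                    (insert (bFun (rk (π (S.card + k))) S hSne) S)).take (k - 1)).toFinset
                  = S ∪ ((Lpick a₁ rk π u k S).take k).toFinset := by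
                rw [hLL, take_pred_cons (bFun (rk (π (S.card + k))) S hSne)
                  (Lpick a₁ rk π u (k - 1)
                    (insert (bFun (rk (π (S.card + k))) S hSne) S)) hk,
                  List.toFinset_cons, Finset.insert_union, Finset.union_insert]
              have he1 : (insert (bFun (rk (π (S.card + k))) S hSne) S).card + (k - 1)
                  = S.card + k := by omega
              have hres := hIH x hx'
              rw [hset, he1] at hres
              exact hres
            · -- the DP defers: the other agent takes b
              have hLL : Lpick a₁ rk π u k S
                  = Lpick a₁ rk π u k
                      (insert (bFun (rk (π (S.card + k))) S hSne) S) :=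
                Lpick_skip a₁ rk π u hlt hk rfl hπ hSne hcond
              have LF' := Lfacts a₁ rk π u m k
                (insert (bFun (rk (π (S.card + k))) S hSne) S) (by omega) (by omega)
              have hbT : bFun (rk (π (S.card + k))) S hSne
                  ∉ (S ∪ ((Lpick a₁ rk π u k S).take k).toFinset) := by
                intro hmem
                rcases Finset.mem_union.mp hmem with h1 | h1
                · exact hbS h1
                · have h2 : bFun (rk (π (S.card + k))) S hSne
                      ∈ Lpick a₁ rk π u k
                        (insert (bFun (rk (π (S.card + k))) S hSne) S) := by
                    rw [← hLL]
                    exact List.mem_of_mem_take (List.mem_toFinset.mp h1)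
                  exact LF'.2.1 _ h2 (Finset.mem_insert_self _ _)
              have hpick : bFun (rk (π (S.card + k)))
                  (S ∪ ((Lpick a₁ rk π u k S).take k).toFinset) hTne
                  = bFun (rk (π (S.card + k))) S hSne := by
                apply bFun_subset _ Finset.subset_union_left hSne hTne
                rw [Finset.mem_compl]
                exact hbT
              rw [hmt]
              intro x hx
              rw [gSet, if_neg hπ, hup]
              apply Finset.mem_union_right
              rw [pickStep_eq _ _ hTne, hpick]
              have hdrop2 : L0.drop j = Lpick a₁ rk π u k
                  (insert (bFun (rk (π (S.card + k))) S hSne) S) := by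
                rw [← hLL]; exact hdrop
              have hIH := ihn k (insert (bFun (rk (π (S.card + k))) S hSne) S) j
                (by omega) (by omega) hdrop2
                (fun y hy => Finset.mem_insert_of_mem (hpre y hy)) x
                (by rw [← hLL]; exact hx)
              have hset : insert (bFun (rk (π (S.card + k))) S hSne) S ∪
                  ((Lpick a₁ rk π u k
                    (insert (bFun (rk (π (S.card + k))) S hSne) S)).take k).toFinset
                  = insert (bFun (rk (π (S.card + k))) S hSne)
                      (S ∪ ((Lpick a₁ rk π u k S).take k).toFinset) := by
                rw [← hLL, Finset.insert_union]
              have he1 : (insert (bFun (rk (π (S.card + k))) S hSne) S).card + k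
                  = S.card + k + 1 := by omega
              have he2 : m - ((insert (bFun (rk (π (S.card + k))) S hSne) S).card + k)
                  = m - (S.card + k) - 1 := by omega
              rw [hset, he2, he1] at hIH
              exact hIH
      · exact hbase k S hlt hkm

end Sim
section Final
variable {A : Type*} [DecidableEq A] {m : ℕ} (a₁ : A) (rk : A → Fin m ≃ Fin m)
  (π : ℕ → A) (u : Fin m → ℝ)

lemma partII_final (r : Fin m ≃ Fin m) :
    ∑ i ∈ alloc (Function.update rk a₁ r) π a₁, u i ≤ V a₁ rk π u 0 ∅ := by
  have hrpt : ∀ a, a ≠ a₁ → Function.update rk a₁ r a = rk a :=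
    fun a ha => Function.update_of_ne ha _ _
  have h := partII a₁ rk π u (Function.update rk a₁ r) hrpt (2 * m) 0 ∅
    (by simp) (by omega) (by simp)
  have h0 : pickedUpTo (Function.update rk a₁ r) π 0 = (∅ : Finset (Fin m)) := rfl
  rw [h0] at h
  simp only [Finset.card_empty, Finset.sum_empty, Finset.sdiff_empty, add_zero,
    Nat.sub_zero] at h
  rw [alloc_eq_gSet, sum_gSet]
  exact h

lemma partIII_final (hpos : ∀ i, 0 < u i) :
    ∃ r : Fin m ≃ Fin m,
      V a₁ rk π u 0 ∅ ≤ ∑ i ∈ alloc (Function.update rk a₁ r) π a₁, u i := by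
  have LF := Lfacts a₁ rk π u m 0 ∅ (by simp) (by simp)
  set L0 := Lpick a₁ rk π u 0 (∅ : Finset (Fin m)) with hL0
  refine ⟨rankOf L0 LF.1, ?_⟩
  have hsim := partIII_sim a₁ rk π u L0 LF.1 m 0 ∅ 0 (by simp) (by simp)
    (by simp [hL0]) (by simp)
  have hsub : L0.toFinset ⊆ alloc (Function.update rk a₁ (rankOf L0 LF.1)) π a₁ := by
    intro x hx
    rw [alloc_eq_gSet]
    have := hsim x (by simpa using List.mem_toFinset.mp hx)
    simpa using this
  calc V a₁ rk π u 0 ∅ = (L0.map u).sum := LF.2.2.2.1.symm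
    _ = ∑ i ∈ L0.toFinset, u i := (List.sum_toFinset u LF.1).symm
    _ ≤ ∑ i ∈ alloc (Function.update rk a₁ (rankOf L0 LF.1)) π a₁, u i :=
        Finset.sum_le_sum_of_subset_of_nonneg hsub
          (fun i _ _ => le_of_lt (hpos i))

end Final

/-- the value `V(0, ∅)` of the dynamic programming recursion equals
the optimal manipulation value, i.e. the maximum over all rankings `r` that the
manipulator `a₁` may report of the utility `u(φ_r(a₁))` of the bundle she gets
(non-manipulators reporting their truthful rankings `rk`; `u` is the
manipulator's injective positive utility function). -/
theorem statement12 {A : Type*} [DecidableEq A] {m : ℕ} (a₁ : A)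
    (rk : A → Fin m ≃ Fin m) (π : ℕ → A) (u : Fin m → ℝ)
    (hpos : ∀ i, 0 < u i) (hinj : Function.Injective u) :
    V a₁ rk π u 0 ∅ =
      ⨆ r : Fin m ≃ Fin m, ∑ i ∈ alloc (Function.update rk a₁ r) π a₁, u i := by
  haveI : Nonempty (Fin m ≃ Fin m) := ⟨Equiv.refl _⟩
  have hbdd : BddAbove (Set.range fun r : Fin m ≃ Fin m =>
      ∑ i ∈ alloc (Function.update rk a₁ r) π a₁, u i) :=
    Set.Finite.bddAbove (Set.finite_range _)
  apply le_antisymm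
  · obtain ⟨r0, hr0⟩ := partIII_final a₁ rk π u hpos
    exact hr0.trans (le_ciSup hbdd r0)
  · exact ciSup_le fun r => partII_final a₁ rk π u r
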